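/- arXiv:1112.5561 — 7 statements merged into one kernel-verified Lean document; each statement's English description precedes it below -/
import Mathlib

section
/- Let w be a modular on X and κ:[0,∞)→[0,∞) be superadditive (κ(λ)+κ(μ) ≤ κ(λ+μ) for all λ,μ≥0), satisfying κ(u)>0 for u>0 and κ(u)→0 as u→0+. Then d_{κ,w}(x,y) = inf{λ>0 : w_λ(x,y) ≤ κ(λ)} defines a metric on the modular space X_w* around a fixed base point x₀. -/
open ENNReal Filter

/-- For a modular `w` and a superadditive `κ` positive on `(0,∞)` with `κ(0+)=0`,
`d_{κ,w}(x,y) = inf{λ>0 : w_λ(x,y) ≤ κ(λ)}` is a metric on the modular space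
`X_w* = {x : ∃ λ>0, w_λ(x,x₀) < ∞}`. -/
theorem stmt6 {X : Type*} (w : ℝ → X → X → ℝ≥0∞) (x₀ : X)
    (hdeg : ∀ x y : X, x = y ↔ (∀ l : ℝ, 0 < l → w l x y = 0))
    (hsym : ∀ l : ℝ, 0 < l → ∀ x y : X, w l x y = w l y x)
    (htri : ∀ l m : ℝ, 0 < l → 0 < m → ∀ x y z : X,
      w (l + m) x y ≤ w l x z + w m z y)
    (κ : ℝ → ℝ)
    (hsuper : ∀ l m : ℝ, 0 ≤ l → 0 ≤ m → κ l + κ m ≤ κ (l + m))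
    (hpos : ∀ u : ℝ, 0 < u → 0 < κ u)
    (hlim : Tendsto κ (nhdsWithin 0 (Set.Ioi 0)) (nhds 0))
    (S : Set X) (hS : S = {x : X | ∃ l : ℝ, 0 < l ∧ w l x x₀ < ⊤})
    (D : X → X → ℝ)
    (hD : ∀ x y : X, D x y = sInf {l : ℝ | 0 < l ∧ w l x y ≤ ENNReal.ofReal (κ l)}) :
    (∀ x ∈ S, ∀ y ∈ S, 0 ≤ D x y) ∧
    (∀ x ∈ S, ∀ y ∈ S, (D x y = 0 ↔ x = y)) ∧
    (∀ x ∈ S, ∀ y ∈ S, D x y = D y x) ∧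
    (∀ x ∈ S, ∀ y ∈ S, ∀ z ∈ S, D x z ≤ D x y + D y z) := by
  subst hS
  set A : X → X → Set ℝ := fun x y => {l : ℝ | 0 < l ∧ w l x y ≤ ENNReal.ofReal (κ l)} with hA
  -- w l x x = 0
  have hself : ∀ (l : ℝ), 0 < l → ∀ x : X, w l x x = 0 := fun l hl x =>
    ((hdeg x x).mp rfl) l hl
  -- monotonicity of w
  have hmono : ∀ (l l' : ℝ), 0 < l → l ≤ l' → ∀ x y : X, w l' x y ≤ w l x y := by
    intro l l' hl hll x y
    rcases eq_or_lt_of_le hll with rfl | h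
    · exact le_refl _
    · have h2 := htri l (l' - l) hl (by linarith) x y y
      rw [hself _ (by linarith) y, add_zero] at h2
      simpa using h2
  -- κ(n+1)u ≥ (n+1) κ u
  have hkmul : ∀ (n : ℕ) (u : ℝ), 0 < u → ((n + 1 : ℕ) : ℝ) * κ u ≤ κ ((n + 1 : ℕ) * u) := by
    intro n u hu
    induction n with
    | zero => simp
    | succ n ih =>
      have h1 := hsuper ((n + 1 : ℕ) * u) u (by positivity) hu.le
      have : ((n + 1 : ℕ) : ℝ) * u + u = ((n + 2 : ℕ) : ℝ) * u := by push_cast; ring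
      rw [this] at h1
      push_cast at ih h1 ⊢
      have e : ((n:ℝ) + 1 + 1) * u = ((n:ℝ) + 2) * u := by ring
      rw [e]
      linarith
  -- nonemptiness of A x y for x y ∈ S
  have hne : ∀ x y : X, (∃ l : ℝ, 0 < l ∧ w l x x₀ < ⊤) →
      (∃ l : ℝ, 0 < l ∧ w l y x₀ < ⊤) → (A x y).Nonempty := by
    intro x y ⟨a, ha, hfa⟩ ⟨b, hb, hfb⟩
    have hab : 0 < a + b := by linarith
    have hC : w (a + b) x y < ⊤ := by
      calc w (a + b) x y ≤ w a x x₀ + w b x₀ y := htri a b ha hb x y x₀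
        _ = w a x x₀ + w b y x₀ := by rw [hsym b hb x₀ y]
        _ < ⊤ := ENNReal.add_lt_top.mpr ⟨hfa, hfb⟩
    set C := (w (a + b) x y).toReal with hCdef
    have hκab := hpos (a + b) hab
    obtain ⟨n, hn⟩ := exists_nat_ge (C / κ (a + b))
    have hnC : C ≤ ((n + 1 : ℕ) : ℝ) * κ (a + b) := by
      have : C / κ (a + b) ≤ ((n + 1 : ℕ) : ℝ) := by push_cast; linarith
      calc C = (C / κ (a + b)) * κ (a + b) := by field_simp
        _ ≤ ((n + 1 : ℕ) : ℝ) * κ (a + b) := by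
            exact mul_le_mul_of_nonneg_right this hκab.le
    refine ⟨((n + 1 : ℕ) : ℝ) * (a + b), by positivity, ?_⟩
    have h1 : ((n + 1 : ℕ) : ℝ) * (a + b) ≥ a + b := by
      have h2 : (1:ℝ) ≤ ((n + 1 : ℕ) : ℝ) := by exact_mod_cast Nat.succ_le_succ (Nat.zero_le n)
      nlinarith
    calc w (((n + 1 : ℕ) : ℝ) * (a + b)) x y ≤ w (a + b) x y := hmono _ _ hab h1 x y
      _ = ENNReal.ofReal C := (ENNReal.ofReal_toReal hC.ne).symm
      _ ≤ ENNReal.ofReal (κ (((n + 1 : ℕ) : ℝ) * (a + b))) := by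
          apply ENNReal.ofReal_le_ofReal
          exact le_trans hnC (le_trans (hkmul n (a + b) hab) (by norm_num))
  have hbdd : ∀ x y : X, BddBelow (A x y) := fun x y =>
    ⟨0, fun l hl => hl.1.le⟩
  have hnonneg : ∀ x y : X, 0 ≤ D x y := by
    intro x y
    rw [hD]
    exact Real.sInf_nonneg (fun l hl => hl.1.le)
  refine ⟨fun x _ y _ => hnonneg x y, ?_, ?_, ?_⟩
  · -- D x y = 0 ↔ x = y
    intro x hx y hy
    constructor
    · intro h0
      by_contra hxy
      have := (hdeg x y).not.mp hxy
      push_neg at this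
      obtain ⟨l₀, hl₀, hw₀⟩ := this
      set ε := min (w l₀ x y) 1 with hεdef
      have hεpos : 0 < ε := lt_min (pos_iff_ne_zero.mpr hw₀) one_pos
      have hεne : ε ≠ ⊤ := ne_top_of_le_ne_top one_ne_top (min_le_right _ _)
      set c := ε.toReal with hcdef
      have hc : 0 < c := ENNReal.toReal_pos hεpos.ne' hεne
      obtain ⟨δ, hδ, hδ2⟩ := Metric.tendsto_nhdsWithin_nhds.mp hlim c hc
      have hlow : ∀ m ∈ A x y, min δ l₀ ≤ m := by
        intro m hm
        by_contra hlt
        push_neg at hlt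
        have hm1 : 0 < m := hm.1
        have hmδ : m < δ := lt_of_lt_of_le hlt (min_le_left _ _)
        have hml₀ : m ≤ l₀ := le_of_lt (lt_of_lt_of_le hlt (min_le_right _ _))
        have hκm : |κ m - 0| < c := by
          have := hδ2 (Set.mem_Ioi.mpr hm1) (by
            simp [Real.dist_eq, abs_of_pos hm1, hmδ])
          simpa [Real.dist_eq] using this
        have hκm' : κ m < c := lt_of_le_of_lt (le_abs_self _) (by simpa using hκm)
        have h1 : ε ≤ w m x y := le_trans (min_le_left _ _) (hmono m l₀ hm1 hml₀ x y)
        have h2 : w m x y ≤ ENNReal.ofReal (κ m) := hm.2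
        have h3 : ENNReal.ofReal (κ m) < ε := by
          calc ENNReal.ofReal (κ m) < ENNReal.ofReal c :=
                ENNReal.ofReal_lt_ofReal_iff hc |>.mpr hκm'
            _ = ε := ENNReal.ofReal_toReal hεne
        exact absurd (lt_of_le_of_lt (le_trans h1 h2) h3) (lt_irrefl _)
      have hnA := hne x y hx hy
      have : min δ l₀ ≤ D x y := by
        rw [hD]; exact le_csInf hnA hlow
      rw [h0] at this
      exact absurd this (not_le.mpr (lt_min hδ hl₀))
    · intro h
      subst h
      rw [hD]
      have hset : A x x = Set.Ioi 0 := by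
        ext l
        simp only [hA, Set.mem_setOf_eq, Set.mem_Ioi]
        constructor
        · exact fun h => h.1
        · intro hl
          exact ⟨hl, by rw [hself l hl x]; exact zero_le⟩
      rw [show {l : ℝ | 0 < l ∧ w l x x ≤ ENNReal.ofReal (κ l)} = A x x from rfl, hset]
      exact csInf_Ioi
  · -- symmetry
    intro x _ y _
    rw [hD, hD]
    congr 1
    ext l
    simp only [Set.mem_setOf_eq]
    constructor
    · intro ⟨hl, h⟩; exact ⟨hl, by rwa [hsym l hl y x]⟩
    · intro ⟨hl, h⟩; exact ⟨hl, by rwa [hsym l hl x y]⟩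
  · -- triangle inequality
    intro x hx y hy z hz
    have hAxy := hne x y hx hy
    have hAyz := hne y z hy hz
    rw [← sub_nonneg]
    by_contra hcon
    push_neg at hcon
    rw [sub_neg] at hcon
    set ε := (D x z - (D x y + D y z)) / 2 with hε
    have hεpos : 0 < ε := by simp [hε]; linarith
    obtain ⟨l, hlA, hlle⟩ := Real.lt_sInf_add_pos hAxy hεpos
    obtain ⟨m, hmA, hmle⟩ := Real.lt_sInf_add_pos hAyz hεpos
    have hl := hlA.1; have hm := hmA.1
    have hmem : l + m ∈ A x z := by
      refine ⟨by linarith, ?_⟩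
      calc w (l + m) x z ≤ w l x y + w m y z := htri l m hl hm x z y
        _ ≤ ENNReal.ofReal (κ l) + ENNReal.ofReal (κ m) := add_le_add hlA.2 hmA.2
        _ = ENNReal.ofReal (κ l + κ m) := (ENNReal.ofReal_add (hpos l hl).le (hpos m hm).le).symm
        _ ≤ ENNReal.ofReal (κ (l + m)) :=
            ENNReal.ofReal_le_ofReal (hsuper l m hl.le hm.le)
    have hle : D x z ≤ l + m := by
      rw [hD]; exact csInf_le (hbdd x z) hmem
    have hlle' : l < D x y + ε := by rw [hD x y]; exact hlle
    have hmle' : m < D y z + ε := by rw [hD y z]; exact hmle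
    have : D x z < D x y + D y z + 2 * ε := by linarith
    simp [hε] at this
    linarith
end

section
/- Let w be a convex modular on X. Then the metric convergence with respect to d_w* coincides with modular convergence on X_w* if and only if w satisfies the Δ₂-condition: whenever {x_n}⊂X_w*, x∈X_w*, and w_λ(x_n,x)→0 for some λ>0, then w_{λ/2}(x_n,x)→0. -/
open ENNReal Filter

/-- For a convex modular `w`, metric convergence with respect to `d_w*`
coincides with modular convergence on `X_w*` iff `w` satisfies the Δ₂-condition. -/
theorem stmt11 {X : Type*} (w : ℝ → X → X → ℝ≥0∞) (x₀ : X)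
    (hdeg : ∀ x y : X, x = y ↔ (∀ l : ℝ, 0 < l → w l x y = 0))
    (hsym : ∀ l : ℝ, 0 < l → ∀ x y : X, w l x y = w l y x)
    (hconv : ∀ l m : ℝ, 0 < l → 0 < m → ∀ x y z : X,
      w (l + m) x y ≤ ENNReal.ofReal (l / (l + m)) * w l x z
        + ENNReal.ofReal (m / (l + m)) * w m y z)
    (S : Set X) (hS : S = {x : X | ∃ l : ℝ, 0 < l ∧ w l x x₀ < ⊤})
    (dstar : X → X → ℝ)
    (hd : ∀ x y : X, dstar x y = sInf {l : ℝ | 0 < l ∧ w l x y ≤ 1}) :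
    (∀ (xs : ℕ → X), (∀ n, xs n ∈ S) → ∀ x ∈ S,
        (Tendsto (fun n => dstar (xs n) x) atTop (nhds 0) ↔
          ∃ l : ℝ, 0 < l ∧ Tendsto (fun n => w l (xs n) x) atTop (nhds 0))) ↔
    (∀ (xs : ℕ → X), (∀ n, xs n ∈ S) → ∀ x ∈ S, ∀ l : ℝ, 0 < l →
        Tendsto (fun n => w l (xs n) x) atTop (nhds 0) →
        Tendsto (fun n => w (l / 2) (xs n) x) atTop (nhds 0)) := by
  -- w vanishes on the diagonal
  have hzero : ∀ l : ℝ, 0 < l → ∀ y : X, w l y y = 0 :=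
    fun l hl y => (hdeg y y).1 rfl l hl
  -- key convexity estimate: for 0 < l < m, w m x y ≤ (l/m) * w l x y
  have hkey : ∀ {l m : ℝ}, 0 < l → l < m → ∀ x y : X,
      w m x y ≤ ENNReal.ofReal (l / m) * w l x y := by
    intro l m hl hlt x y
    have h := hconv l (m - l) hl (by linarith) x y y
    have hm : l + (m - l) = m := by ring
    rw [hm, hzero (m - l) (by linarith) y, mul_zero, add_zero] at h
    exact h
  -- monotonicity in the first argument
  have hmono : ∀ {l m : ℝ}, 0 < l → l ≤ m → ∀ x y : X, w m x y ≤ w l x y := by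
    intro l m hl hlm x y
    rcases eq_or_lt_of_le hlm with rfl | hlt
    · exact le_rfl
    · calc w m x y ≤ ENNReal.ofReal (l / m) * w l x y := hkey hl hlt x y
        _ ≤ 1 * w l x y := by
            gcongr
            exact ENNReal.ofReal_le_one.2 (div_le_one_of_le₀ hlm (by linarith))
        _ = w l x y := one_mul _
  -- for points of S the set defining dstar is nonempty
  have hne : ∀ x ∈ S, ∀ y ∈ S, ∃ l : ℝ, 0 < l ∧ w l x y ≤ 1 := by
    intro x hx y hy
    rw [hS] at hx hy
    obtain ⟨a, ha, hax⟩ := hx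
    obtain ⟨b, hb, hby⟩ := hy
    have hab : (0:ℝ) < a + b := by linarith
    have hC : w (a + b) x y < ⊤ := by
      refine lt_of_le_of_lt (hconv a b ha hb x y x₀) ?_
      exact ENNReal.add_lt_top.2 ⟨ENNReal.mul_lt_top ofReal_lt_top hax,
        ENNReal.mul_lt_top ofReal_lt_top hby⟩
    set c : ℝ := (w (a + b) x y).toReal with hc
    have hc0 : 0 ≤ c := ENNReal.toReal_nonneg
    refine ⟨(a + b) * (c + 2), by nlinarith, ?_⟩
    have h1 : a + b < (a + b) * (c + 2) := by nlinarith
    calc w ((a + b) * (c + 2)) x y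
        ≤ ENNReal.ofReal ((a + b) / ((a + b) * (c + 2))) * w (a + b) x y :=
          hkey hab h1 x y
      _ = ENNReal.ofReal (1 / (c + 2)) * ENNReal.ofReal c := by
          rw [ENNReal.ofReal_toReal hC.ne]
          congr 1
          field_simp
      _ = ENNReal.ofReal (c / (c + 2)) := by
          rw [← ENNReal.ofReal_mul (by positivity)]
          ring_nf
      _ ≤ 1 := ENNReal.ofReal_le_one.2 (div_le_one_of_le₀ (by linarith) (by linarith))
  -- dstar is nonnegative
  have hd0 : ∀ x y : X, 0 ≤ dstar x y := by
    intro x y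
    rw [hd]
    exact Real.sInf_nonneg (fun a ha => ha.1.le)
  -- for x, y ∈ S: dstar x y < l → w l x y ≤ 1
  have hdlt : ∀ x ∈ S, ∀ y ∈ S, ∀ l : ℝ, 0 < l → dstar x y < l → w l x y ≤ 1 := by
    intro x hx y hy l hl h
    rw [hd] at h
    obtain ⟨m, hm, hmw⟩ := hne x hx y hy
    have hnonem : {l : ℝ | 0 < l ∧ w l x y ≤ 1}.Nonempty := ⟨m, hm, hmw⟩
    obtain ⟨t, ⟨ht0, htw⟩, htl⟩ :=
      (csInf_lt_iff ⟨0, fun a ha => ha.1.le⟩ hnonem).1 h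
    exact le_trans (hmono ht0 htl.le x y) htw
  -- forward: metric convergence implies modular convergence for every λ
  have fwd : ∀ (xs : ℕ → X), (∀ n, xs n ∈ S) → ∀ x ∈ S,
      Tendsto (fun n => dstar (xs n) x) atTop (nhds 0) →
      ∀ l : ℝ, 0 < l → Tendsto (fun n => w l (xs n) x) atTop (nhds 0) := by
    intro xs hxs x hx hm l hl
    rw [ENNReal.tendsto_nhds_zero]
    intro ε hε
    set ε' : ℝ≥0∞ := min ε 1 with hε'
    have hε'top : ε' ≠ ⊤ := ((min_le_right ε 1).trans_lt one_lt_top).ne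
    have hε'0 : 0 < ε' := lt_min hε zero_lt_one
    set e : ℝ := ε'.toReal with he
    have he0 : 0 < e := ENNReal.toReal_pos hε'0.ne' hε'top
    have he1 : e ≤ 1 := by
      have := ENNReal.toReal_mono (by simp) (min_le_right ε (1:ℝ≥0∞))
      simpa using this
    set t : ℝ := l * e / 2 with ht
    have ht0 : 0 < t := by positivity
    have htl : t < l := by nlinarith
    filter_upwards [hm.eventually_lt_const ht0] with n hn
    have h1 : w t (xs n) x ≤ 1 := hdlt _ (hxs n) _ hx t ht0 hn
    calc w l (xs n) x ≤ ENNReal.ofReal (t / l) * w t (xs n) x := hkey ht0 htl _ _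
      _ ≤ ENNReal.ofReal (t / l) * 1 := by gcongr
      _ = ENNReal.ofReal (e / 2) := by
          rw [mul_one]; congr 1; field_simp [ht]; ring
      _ ≤ ENNReal.ofReal e := ENNReal.ofReal_le_ofReal (by linarith)
      _ = ε' := ENNReal.ofReal_toReal hε'top
      _ ≤ ε := min_le_left _ _
  -- backward: modular convergence for all λ implies metric convergence
  have bwd : ∀ (xs : ℕ → X), (∀ n, xs n ∈ S) → ∀ x ∈ S,
      (∀ l : ℝ, 0 < l → Tendsto (fun n => w l (xs n) x) atTop (nhds 0)) →
      Tendsto (fun n => dstar (xs n) x) atTop (nhds 0) := by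
    intro xs hxs x hx hall
    rw [Metric.tendsto_atTop]
    intro ε hε
    have h2 := (ENNReal.tendsto_nhds_zero.1 (hall (ε/2) (by positivity))) 1 zero_lt_one
    obtain ⟨N, hN⟩ := eventually_atTop.1 h2
    refine ⟨N, fun n hn => ?_⟩
    have hmem : (ε/2) ∈ {l : ℝ | 0 < l ∧ w l (xs n) x ≤ 1} := ⟨by positivity, hN n hn⟩
    have hle : dstar (xs n) x ≤ ε/2 := by
      rw [hd]
      exact csInf_le ⟨0, fun a ha => ha.1.le⟩ hmem
    rw [Real.dist_eq, sub_zero, abs_of_nonneg (hd0 _ _)]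
    linarith
  constructor
  · intro H xs hxs x hx l hl hwl
    have hm := (H xs hxs x hx).2 ⟨l, hl, hwl⟩
    exact fwd xs hxs x hx hm (l/2) (by positivity)
  · intro H xs hxs x hx
    constructor
    · intro hm
      exact ⟨1, one_pos, fwd xs hxs x hx hm 1 one_pos⟩
    · rintro ⟨l, hl, hwl⟩
      apply bwd xs hxs x hx
      have iter : ∀ k : ℕ,
          Tendsto (fun n => w (l / 2 ^ k) (xs n) x) atTop (nhds 0) := by
        intro k
        induction k with
        | zero => simpa using hwl
        | succ k ih =>
          have h2 := H xs hxs x hx (l / 2 ^ k) (by positivity) ih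
          have heq : l / 2 ^ k / 2 = l / 2 ^ (k + 1) := by
            rw [div_div, pow_succ]
          rwa [heq] at h2
      intro m hm
      obtain ⟨k, hk⟩ : ∃ k : ℕ, l / m < 2 ^ k :=
        pow_unbounded_of_one_lt _ one_lt_two
      have hcmp : l / 2 ^ k ≤ m := by
        rw [div_le_iff₀ (by positivity)]
        have := (div_lt_iff₀ hm).1 hk
        nlinarith
      rw [ENNReal.tendsto_nhds_zero]
      intro ε hε
      filter_upwards [ENNReal.tendsto_nhds_zero.1 (iter k) ε hε] with n hn
      exact le_trans (hmono (by positivity) hcmp _ _) hn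
end

section
/- Let w be a convex modular on X, T:X_w*→X_w*, k>0, and x,y∈X_w*. Then d_w*(Tx,Ty) ≤ k·d_w*(x,y) if and only if for every λ>0 with w_λ(x,y)≤1 one has the right limit w_{kλ+0}(Tx,Ty) := lim_{μ→kλ+} w_μ(Tx,Ty) ≤ 1. -/
open ENNReal Filter

/-- Characterization of Lipschitz maps for `d_w*`: `d_w*(Tx,Ty) ≤ k·d_w*(x,y)` iff
for every `λ > 0` with `w_λ(x,y) ≤ 1` the right limit `w_{kλ+0}(Tx,Ty) ≤ 1`.
Since `μ ↦ w_μ` is nonincreasing, the right limit at `kλ` equals `⨆ μ > kλ, w_μ`. -/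
theorem stmt14 {X : Type*} (w : ℝ → X → X → ℝ≥0∞) (x₀ : X)
    (hdeg : ∀ x y : X, x = y ↔ (∀ l : ℝ, 0 < l → w l x y = 0))
    (hsym : ∀ l : ℝ, 0 < l → ∀ x y : X, w l x y = w l y x)
    (hconv : ∀ l m : ℝ, 0 < l → 0 < m → ∀ x y z : X,
      w (l + m) x y ≤ ENNReal.ofReal (l / (l + m)) * w l x z
        + ENNReal.ofReal (m / (l + m)) * w m y z)
    (S : Set X) (hS : S = {x : X | ∃ l : ℝ, 0 < l ∧ w l x x₀ < ⊤})
    (dstar : X → X → ℝ)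
    (hd : ∀ x y : X, dstar x y = sInf {l : ℝ | 0 < l ∧ w l x y ≤ 1})
    (T : X → X) (hT : ∀ x ∈ S, T x ∈ S)
    (k : ℝ) (hk : 0 < k)
    (x : X) (hx : x ∈ S) (y : X) (hy : y ∈ S) :
    dstar (T x) (T y) ≤ k * dstar x y ↔
      ∀ l : ℝ, 0 < l → w l x y ≤ 1 →
        (⨆ m ∈ Set.Ioi (k * l), w m (T x) (T y)) ≤ 1 := by
  -- scaling/monotonicity
  have mono : ∀ (a b : X) (l m : ℝ), 0 < l → l < m →
      w m a b ≤ ENNReal.ofReal (l / m) * w l a b := by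
    intro a b l m hl hlm
    have h := hconv l (m - l) hl (by linarith) a b b
    have hz : w (m - l) b b = 0 := ((hdeg b b).mp rfl) _ (by linarith)
    rw [hz] at h
    simpa [show l + (m - l) = m by ring] using h
  have mono' : ∀ (a b : X) (l m : ℝ), 0 < l → l ≤ m → w m a b ≤ w l a b := by
    intro a b l m hl hlm
    rcases eq_or_lt_of_le hlm with rfl | hlt
    · exact le_rfl
    · refine (mono a b l m hl hlt).trans ?_
      calc ENNReal.ofReal (l / m) * w l a b ≤ 1 * w l a b := by
            gcongr
            exact ENNReal.ofReal_le_one.mpr ((div_le_one (hl.trans hlt)).mpr hlt.le)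
        _ = w l a b := one_mul _
  -- nonemptiness of the sets
  have nonemp : ∀ a ∈ S, ∀ b ∈ S, ∃ l, 0 < l ∧ w l a b ≤ 1 := by
    intro a ha b hb
    rw [hS] at ha hb
    obtain ⟨p, hp, hpa⟩ := ha
    obtain ⟨q, hq, hqb⟩ := hb
    have hc : w (p + q) a b < ⊤ := by
      refine lt_of_le_of_lt (hconv p q hp hq a b x₀) ?_
      exact ENNReal.add_lt_top.mpr ⟨ENNReal.mul_lt_top ENNReal.ofReal_lt_top hpa,
        ENNReal.mul_lt_top ENNReal.ofReal_lt_top hqb⟩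
    set c := p + q with hcdef
    have hc0 : 0 < c := by positivity
    by_cases h1 : w c a b ≤ 1
    · exact ⟨c, hc0, h1⟩
    · push_neg at h1
      set t := (w c a b).toReal with htdef
      have ht : 1 < t := by
        rw [htdef]
        have := (ENNReal.toReal_lt_toReal ENNReal.one_ne_top hc.ne).mpr h1
        simpa using this
      have ht0 : 0 < t := by linarith
      refine ⟨c * (t + 1), by positivity, ?_⟩
      have hlt : c < c * (t + 1) := by nlinarith
      refine (mono a b c _ hc0 hlt).trans ?_
      have hw : w c a b = ENNReal.ofReal t := (ENNReal.ofReal_toReal hc.ne).symm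
      rw [hw, show c / (c * (t + 1)) = 1 / (t + 1) by field_simp,
        ← ENNReal.ofReal_mul (by positivity)]
      refine ENNReal.ofReal_le_one.mpr ?_
      rw [one_div, inv_mul_eq_div]
      exact (div_le_one (by linarith)).mpr (by linarith)
  have hTx := hT x hx
  have hTy := hT y hy
  set A := {l : ℝ | 0 < l ∧ w l x y ≤ 1} with hA
  set B := {l : ℝ | 0 < l ∧ w l (T x) (T y) ≤ 1} with hB
  have hAne : A.Nonempty := nonemp x hx y hy
  have hBne : B.Nonempty := nonemp _ hTx _ hTy
  have hAbdd : BddBelow A := ⟨0, fun b hb => hb.1.le⟩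
  have hBbdd : BddBelow B := ⟨0, fun b hb => hb.1.le⟩
  rw [hd, hd, ← hA, ← hB]
  constructor
  · intro h l hl hwl
    simp only [iSup_le_iff]
    intro m hm
    have hlA : l ∈ A := ⟨hl, hwl⟩
    have h1 : sInf A ≤ l := csInf_le hAbdd hlA
    have h2 : sInf B < m := by
      calc sInf B ≤ k * sInf A := h
        _ ≤ k * l := by nlinarith
        _ < m := hm
    obtain ⟨b, hbB, hbm⟩ := exists_lt_of_csInf_lt hBne h2
    exact (mono' _ _ b m hbB.1 hbm.le).trans hbB.2
  · intro h
    have key : ∀ l ∈ A, sInf B ≤ k * l := by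
      intro l hlA
      refine le_of_forall_pos_le_add ?_
      intro ε hε
      have hmem : k * l + ε ∈ B := by
        refine ⟨by nlinarith [hlA.1], ?_⟩
        have := h l hlA.1 hlA.2
        exact le_trans (le_iSup₂ (f := fun m _ => w m (T x) (T y)) (k * l + ε)
          (by simp [Set.mem_Ioi]; linarith)) this
      exact csInf_le hBbdd hmem
    have hlb : sInf B / k ≤ sInf A := by
      refine le_csInf hAne ?_
      intro l hlA
      exact (div_le_iff₀ hk).mpr (by linarith [key l hlA])
    calc sInf B = k * (sInf B / k) := by field_simp
      _ ≤ k * sInf A := by nlinarith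
end

section
/- Let w be a modular on X, k>0, T:X_w*→X_w*, and x,y∈X_w*. Then d_w(Tx,Ty) ≤ k·d_w(x,y) if and only if w_{kλ+0}(Tx,Ty) ≤ kλ for all λ>0 such that w_λ(x,y) ≤ λ, where d_w(x,y)=inf{λ>0 : w_λ(x,y)≤λ} and w_{kλ+0} denotes the right limit in the parameter. -/
open ENNReal Filter

/-- Characterization of Lipschitz maps for `d_w`: `d_w(Tx,Ty) ≤ k·d_w(x,y)` iff
`w_{kλ+0}(Tx,Ty) ≤ kλ` for all `λ > 0` such that `w_λ(x,y) ≤ λ`.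
Since `μ ↦ w_μ` is nonincreasing, the right limit at `kλ` equals `⨆ μ > kλ, w_μ`. -/
theorem stmt16 {X : Type*} (w : ℝ → X → X → ℝ≥0∞) (x₀ : X)
    (hdeg : ∀ x y : X, x = y ↔ (∀ l : ℝ, 0 < l → w l x y = 0))
    (hsym : ∀ l : ℝ, 0 < l → ∀ x y : X, w l x y = w l y x)
    (htri : ∀ l m : ℝ, 0 < l → 0 < m → ∀ x y z : X,
      w (l + m) x y ≤ w l x z + w m z y)
    (S : Set X) (hS : S = {x : X | ∃ l : ℝ, 0 < l ∧ w l x x₀ < ⊤})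
    (dw : X → X → ℝ)
    (hd : ∀ x y : X, dw x y = sInf {l : ℝ | 0 < l ∧ w l x y ≤ ENNReal.ofReal l})
    (T : X → X) (hT : ∀ x ∈ S, T x ∈ S)
    (k : ℝ) (hk : 0 < k)
    (x : X) (hx : x ∈ S) (y : X) (hy : y ∈ S) :
    dw (T x) (T y) ≤ k * dw x y ↔
      ∀ l : ℝ, 0 < l → w l x y ≤ ENNReal.ofReal l →
        (⨆ m ∈ Set.Ioi (k * l), w m (T x) (T y)) ≤ ENNReal.ofReal (k * l) := by
  have hzero : ∀ (z : X) (l : ℝ), 0 < l → w l z z = 0 := fun z l hl =>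
    (hdeg z z).mp rfl l hl
  have hmono : ∀ (a b : X) (l m : ℝ), 0 < l → l ≤ m → w m a b ≤ w l a b := by
    intro a b l m hl hlm
    rcases eq_or_lt_of_le hlm with h | h
    · rw [h]
    · have h2 := htri l (m - l) hl (by linarith) a b b
      rw [show l + (m - l) = m by ring] at h2
      simpa [hzero b (m - l) (by linarith)] using h2
  have hne : ∀ a ∈ S, ∀ b ∈ S,
      ({l : ℝ | 0 < l ∧ w l a b ≤ ENNReal.ofReal l}).Nonempty := by
    intro a ha b hb
    rw [hS] at ha hb
    obtain ⟨l, hl, hla⟩ := ha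
    obtain ⟨l', hl', hlb⟩ := hb
    have hfin : w (l + l') a b < ⊤ := by
      calc w (l + l') a b ≤ w l a x₀ + w l' x₀ b := htri l l' hl hl' a b x₀
        _ < ⊤ := by
          rw [hsym l' hl' x₀ b]
          exact ENNReal.add_lt_top.mpr ⟨hla, hlb⟩
    set c := (w (l + l') a b).toReal with hc
    refine ⟨max (l + l') c, lt_of_lt_of_le (by linarith) (le_max_left _ _), ?_⟩
    calc w (max (l + l') c) a b ≤ w (l + l') a b :=
          hmono a b _ _ (by linarith) (le_max_left _ _)
      _ = ENNReal.ofReal c := (ENNReal.ofReal_toReal hfin.ne).symm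
      _ ≤ ENNReal.ofReal (max (l + l') c) :=
          ENNReal.ofReal_le_ofReal (le_max_right _ _)
  have hbdd : ∀ a b : X, BddBelow {l : ℝ | 0 < l ∧ w l a b ≤ ENNReal.ofReal l} :=
    fun a b => ⟨0, fun l hl => hl.1.le⟩
  have hneT := hne _ (hT x hx) _ (hT y hy)
  have hnexy := hne x hx y hy
  constructor
  · intro h l hl hwl
    have hdxy : dw x y ≤ l := by
      rw [hd]; exact csInf_le (hbdd x y) ⟨hl, hwl⟩
    have hB : sInf {l : ℝ | 0 < l ∧ w l (T x) (T y) ≤ ENNReal.ofReal l} ≤ k * l := by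
      rw [← hd]
      calc dw (T x) (T y) ≤ k * dw x y := h
        _ ≤ k * l := by nlinarith
    refine iSup₂_le fun m hm => ?_
    have hm' : k * l < m := hm
    refine ENNReal.le_of_forall_pos_le_add fun ε hε _ => ?_
    have hεR : (0 : ℝ) < (ε : ℝ) := hε
    obtain ⟨l', hl'B, hl'lt⟩ := exists_lt_of_csInf_lt hneT
      (lt_of_le_of_lt hB (lt_min hm' (lt_add_of_pos_right _ hεR)))
    have hl'm : l' < m := lt_of_lt_of_le hl'lt (min_le_left _ _)
    have hl'e : l' < k * l + (ε : ℝ) := lt_of_lt_of_le hl'lt (min_le_right _ _)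
    calc w m (T x) (T y) ≤ w l' (T x) (T y) :=
          hmono _ _ _ _ hl'B.1 hl'm.le
      _ ≤ ENNReal.ofReal l' := hl'B.2
      _ ≤ ENNReal.ofReal (k * l + (ε : ℝ)) := ENNReal.ofReal_le_ofReal hl'e.le
      _ = ENNReal.ofReal (k * l) + ENNReal.ofReal (ε : ℝ) :=
          ENNReal.ofReal_add (by positivity) hεR.le
      _ = ENNReal.ofReal (k * l) + (ε : ℝ≥0∞) := by rw [ENNReal.ofReal_coe_nnreal]
  · intro h
    rw [hd, hd]
    refine le_of_forall_gt_imp_ge_of_dense fun t ht => ?_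
    have htk : sInf {l : ℝ | 0 < l ∧ w l x y ≤ ENNReal.ofReal l} < t / k :=
      (lt_div_iff₀' hk).mpr ht
    obtain ⟨l, hlA, hlt⟩ := exists_lt_of_csInf_lt hnexy htk
    have hkl : k * l < t := by
      rw [lt_div_iff₀' hk] at hlt; exact hlt
    have hsup := h l hlA.1 hlA.2
    have hwt : w t (T x) (T y) ≤ ENNReal.ofReal (k * l) := by
      refine le_trans ?_ hsup
      exact le_iSup₂ (f := fun m (_ : m ∈ Set.Ioi (k * l)) => w m (T x) (T y)) t hkl
    have hkl0 : 0 < k * l := mul_pos hk hlA.1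
    refine csInf_le (hbdd _ _) ⟨lt_trans hkl0 hkl, ?_⟩
    exact le_trans hwt (ENNReal.ofReal_le_ofReal hkl.le)
end

section
/- Let w be a strict convex modular on X such that X_w* is modular complete, and let T:X_w*→X_w* be modular contractive: there exist 0<k<1 and λ₀>0 with w_{kλ}(Tx,Ty) ≤ w_λ(x,y) for all 0<λ≤λ₀ and x,y∈X_w*. Assume also that for each λ>0 there exists x∈X_w* with w_λ(x,Tx)<∞. Then T has a fixed point x*∈X_w*. -/
open ENNReal Filter

/-- Fixed point theorem for modular contractions: if `w` is a strict convex modular,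
`X_w*` is modular complete, `T` is modular contractive and condition (6.11) holds,
then `T` has a fixed point in `X_w*`. -/
theorem stmt17 {X : Type*} (w : ℝ → X → X → ℝ≥0∞) (x₀ : X)
    (h0 : ∀ l : ℝ, 0 < l → ∀ x : X, w l x x = 0)
    (hsym : ∀ l : ℝ, 0 < l → ∀ x y : X, w l x y = w l y x)
    (hconv : ∀ l m : ℝ, 0 < l → 0 < m → ∀ x y z : X,
      w (l + m) x y ≤ ENNReal.ofReal (l / (l + m)) * w l x z
        + ENNReal.ofReal (m / (l + m)) * w m y z)
    (hstrict : ∀ x y : X, ∀ l : ℝ, 0 < l → w l x y = 0 → x = y)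
    (S : Set X) (hS : S = {x : X | ∃ l : ℝ, 0 < l ∧ w l x x₀ < ⊤})
    (hcomplete : ∀ (xs : ℕ → X), (∀ n, xs n ∈ S) → ∀ l : ℝ, 0 < l →
      Tendsto (fun p : ℕ × ℕ => w l (xs p.1) (xs p.2)) atTop (nhds 0) →
      ∃ x ∈ S, Tendsto (fun n => w l (xs n) x) atTop (nhds 0))
    (T : X → X) (hT : ∀ x ∈ S, T x ∈ S)
    (k l₀ : ℝ) (hk : 0 < k) (hk1 : k < 1) (hl₀ : 0 < l₀)
    (hcontr : ∀ l : ℝ, 0 < l → l ≤ l₀ → ∀ x ∈ S, ∀ y ∈ S,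
      w (k * l) (T x) (T y) ≤ w l x y)
    (hreach : ∀ l : ℝ, 0 < l → ∃ x ∈ S, w l x (T x) < ⊤) :
    ∃ x ∈ S, T x = x := by
  -- monotonicity of the modular in λ
  have hmono : ∀ μ ν : ℝ, 0 < μ → μ < ν → ∀ a b : X,
      w ν a b ≤ ENNReal.ofReal (μ / ν) * w μ a b := by
    intro μ ν hμ hμν a b
    have h := hconv μ (ν - μ) hμ (by linarith) a b b
    rw [h0 (ν - μ) (by linarith) b] at h
    have hνeq : μ + (ν - μ) = ν := by ring
    rw [hνeq] at h
    simpa using h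
  set l₁ : ℝ := (1 - k) * l₀ with hl₁def
  have hl₁pos : 0 < l₁ := mul_pos (by linarith) hl₀
  obtain ⟨x, hxS, hC⟩ := hreach l₁ hl₁pos
  set C := w l₁ x (T x) with hCdef
  set xs : ℕ → X := fun n => T^[n] x with hxsdef
  have hxsS : ∀ n, xs n ∈ S := by
    intro n
    induction n with
    | zero => simpa [hxsdef] using hxS
    | succ n ih =>
      have := hT _ ih
      simpa [hxsdef, Function.iterate_succ_apply'] using this
  have hxs_succ : ∀ n, xs (n + 1) = T (xs n) := fun n =>
    Function.iterate_succ_apply' T n x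
  have hkpowpos : ∀ n : ℕ, 0 < k ^ n * l₁ := fun n =>
    mul_pos (pow_pos hk n) hl₁pos
  have hkpow_le : ∀ n : ℕ, k ^ n * l₁ ≤ l₀ := by
    intro n
    have h1 : k ^ n ≤ 1 := pow_le_one₀ hk.le hk1.le
    have h2 : l₁ ≤ l₀ := by
      rw [hl₁def]; nlinarith
    nlinarith [hl₁pos]
  -- Claim A: consecutive distances
  have hA : ∀ n : ℕ, w (k ^ n * l₁) (xs n) (xs (n + 1)) ≤ C := by
    intro n
    induction n with
    | zero =>
      simp only [pow_zero, one_mul]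
      have h01 : xs 0 = x := rfl
      have h11 : xs 1 = T x := by simp [hxsdef]
      rw [h01, h11]
    | succ n ih =>
      have hc := hcontr (k ^ n * l₁) (hkpowpos n) (hkpow_le n)
        (xs n) (hxsS n) (xs (n + 1)) (hxsS (n + 1))
      have heq : k ^ (n + 1) * l₁ = k * (k ^ n * l₁) := by ring
      rw [← heq, ← hxs_succ n, ← hxs_succ (n + 1)] at hc
      exact hc.trans ih
  -- geometric sums
  set g : ℕ → ℝ := fun j => ∑ i ∈ Finset.range j, k ^ i with hgdef
  have hg1 : ∀ j : ℕ, 1 ≤ j → 1 ≤ g j := by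
    intro j hj
    have : (k:ℝ) ^ 0 ≤ ∑ i ∈ Finset.range j, k ^ i := by
      apply Finset.single_le_sum (f := fun i => (k:ℝ) ^ i)
      · intro i _; positivity
      · exact Finset.mem_range.2 hj
    simpa [hgdef] using this
  have hgpos : ∀ j : ℕ, 1 ≤ j → 0 < g j := fun j hj => lt_of_lt_of_le one_pos (hg1 j hj)
  have hgbound : ∀ j : ℕ, g j < 1 / (1 - k) := by
    intro j
    have hgm : g j * (k - 1) = k ^ j - 1 := by
      simpa [hgdef] using geom_sum_mul k j
    have hkj : 0 < k ^ j := pow_pos hk j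
    rw [lt_div_iff₀ (by linarith : (0:ℝ) < 1 - k)]
    nlinarith
  -- Claim B
  have hB : ∀ j : ℕ, 1 ≤ j → ∀ n : ℕ, w (k ^ n * l₁ * g j) (xs n) (xs (n + j)) ≤ C := by
    intro j
    induction j with
    | zero => intro h; exact absurd h (by norm_num)
    | succ j ih =>
      intro _ n
      rcases Nat.eq_zero_or_pos j with hj0 | hj1
      · subst hj0
        have : g 1 = 1 := by simp [hgdef]
        rw [this, mul_one]
        exact hA n
      · -- step
        have hgj := hgpos j hj1
        have hsum : k ^ n * l₁ * g (j + 1) = k ^ n * l₁ + k ^ (n + 1) * l₁ * g j := by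
          have : g (j + 1) = k * g j + 1 := by
            simp only [hgdef]; rw [geom_sum_succ]
          rw [this]; ring
        set a := k ^ n * l₁ with hadef
        set b := k ^ (n + 1) * l₁ * g j with hbdef
        have hapos : 0 < a := hkpowpos n
        have hbpos : 0 < b := mul_pos (hkpowpos (n + 1)) hgj
        have hc := hconv a b hapos hbpos (xs n) (xs (n + (j + 1))) (xs (n + 1))
        rw [hsum]
        have h1 : w a (xs n) (xs (n + 1)) ≤ C := hA n
        have h2 : w b (xs (n + (j + 1))) (xs (n + 1)) ≤ C := by
          rw [hsym b hbpos]
          have := ih hj1 (n + 1)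
          have heq : n + 1 + j = n + (j + 1) := by ring
          rw [heq] at this
          exact this
        calc w (a + b) (xs n) (xs (n + (j + 1)))
            ≤ ENNReal.ofReal (a / (a + b)) * w a (xs n) (xs (n + 1))
              + ENNReal.ofReal (b / (a + b)) * w b (xs (n + (j + 1))) (xs (n + 1)) := hc
          _ ≤ ENNReal.ofReal (a / (a + b)) * C + ENNReal.ofReal (b / (a + b)) * C := by
              gcongr
          _ = (ENNReal.ofReal (a / (a + b)) + ENNReal.ofReal (b / (a + b))) * C := by
              rw [add_mul]
          _ = C := by
              have hab : (0:ℝ) < a + b := by linarith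
              rw [← ENNReal.ofReal_add (div_nonneg hapos.le hab.le)
                (div_nonneg hbpos.le hab.le), ← add_div, div_self hab.ne',
                ENNReal.ofReal_one, one_mul]
  have hCne : C ≠ ⊤ := hC.ne
  -- Cauchy bound: for 1 ≤ n < m
  have hbound : ∀ n m : ℕ, 1 ≤ n → n < m → w l₀ (xs n) (xs m) ≤ ENNReal.ofReal (k ^ n) * C := by
    intro n m hn hnm
    set j := m - n with hjdef
    have hj1 : 1 ≤ j := by omega
    have hm : m = n + j := by omega
    set μ := k ^ n * l₁ * g j with hμdef
    have hμpos : 0 < μ := mul_pos (hkpowpos n) (hgpos j hj1)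
    have hμlt : μ < k ^ n * l₀ := by
      have h1 : g j < 1 / (1 - k) := hgbound j
      have h1k : (1:ℝ) - k ≠ 0 := by linarith
      have h2 : l₁ * (1 / (1 - k)) = l₀ := by
        rw [hl₁def, mul_one_div, mul_comm, mul_div_assoc, div_self h1k, mul_one]
      calc μ = k ^ n * (l₁ * g j) := by rw [hμdef]; ring
        _ < k ^ n * (l₁ * (1 / (1 - k))) := by
            apply mul_lt_mul_of_pos_left _ (pow_pos hk n)
            exact mul_lt_mul_of_pos_left h1 hl₁pos
        _ = k ^ n * l₀ := by rw [h2]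
    have hμltl₀ : μ < l₀ := by
      have : k ^ n * l₀ ≤ 1 * l₀ := by
        apply mul_le_mul_of_nonneg_right (pow_le_one₀ hk.le hk1.le) hl₀.le
      calc μ < k ^ n * l₀ := hμlt
        _ ≤ l₀ := by linarith
    calc w l₀ (xs n) (xs m) ≤ ENNReal.ofReal (μ / l₀) * w μ (xs n) (xs m) :=
          hmono μ l₀ hμpos hμltl₀ _ _
      _ ≤ ENNReal.ofReal (μ / l₀) * C := by
          gcongr
          rw [hm]
          exact hB j hj1 n
      _ ≤ ENNReal.ofReal (k ^ n) * C := by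
          refine mul_le_mul_left (ENNReal.ofReal_le_ofReal ?_) C
          rw [div_le_iff₀ hl₀]
          linarith
  -- upper bound for all pairs with min ≥ 1
  have hbound' : ∀ p : ℕ × ℕ, 1 ≤ min p.1 p.2 →
      w l₀ (xs p.1) (xs p.2) ≤ ENNReal.ofReal (k ^ min p.1 p.2) * C := by
    intro ⟨n, m⟩ hp
    simp only [Prod.fst, Prod.snd] at *
    rcases lt_trichotomy n m with h | h | h
    · have hmin : min n m = n := min_eq_left h.le
      rw [hmin] at hp ⊢
      exact hbound n m hp h
    · subst h
      rw [h0 l₀ hl₀]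
      exact zero_le
    · have hmin : min n m = m := min_eq_right h.le
      rw [hmin] at hp ⊢
      rw [hsym l₀ hl₀]
      exact hbound m n hp h
  -- Cauchy
  have hcauchy : Tendsto (fun p : ℕ × ℕ => w l₀ (xs p.1) (xs p.2)) atTop (nhds 0) := by
    have hminT : Tendsto (fun p : ℕ × ℕ => min p.1 p.2) atTop atTop := by
      apply tendsto_atTop.2
      intro b
      rw [eventually_atTop]
      exact ⟨(b, b), fun p hp => le_min hp.1 hp.2⟩
    have hk0 : Tendsto (fun n : ℕ => ENNReal.ofReal (k ^ n) * C) atTop (nhds 0) := by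
      have h1 : Tendsto (fun n : ℕ => k ^ n) atTop (nhds 0) :=
        tendsto_pow_atTop_nhds_zero_of_lt_one hk.le hk1
      have h2 : Tendsto (fun n : ℕ => ENNReal.ofReal (k ^ n)) atTop (nhds 0) := by
        simpa [Function.comp_def] using (ENNReal.continuous_ofReal.tendsto 0).comp h1
      simpa using ENNReal.Tendsto.mul_const h2 (Or.inr hCne)
    refine tendsto_of_tendsto_of_tendsto_of_le_of_le' tendsto_const_nhds
      (hk0.comp hminT) (Eventually.of_forall fun p => zero_le) ?_
    rw [eventually_atTop]
    exact ⟨(1, 1), fun p hp => hbound' p (le_min hp.1 hp.2)⟩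
  obtain ⟨y, hyS, hylim⟩ := hcomplete xs hxsS l₀ hl₀ hcauchy
  refine ⟨y, hyS, ?_⟩
  -- show T y = y
  have hkl₀ : 0 < k * l₀ := mul_pos hk hl₀
  have key : ∀ n : ℕ, w (l₀ + k * l₀) y (T y) ≤
      ENNReal.ofReal (l₀ / (l₀ + k * l₀)) * w l₀ (xs (n + 1)) y
        + ENNReal.ofReal (k * l₀ / (l₀ + k * l₀)) * w l₀ (xs n) y := by
    intro n
    have hc := hconv l₀ (k * l₀) hl₀ hkl₀ y (T y) (xs (n + 1))
    have h1 : w l₀ y (xs (n + 1)) = w l₀ (xs (n + 1)) y := hsym l₀ hl₀ _ _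
    have h2 : w (k * l₀) (T y) (xs (n + 1)) ≤ w l₀ (xs n) y := by
      rw [hxs_succ n, hsym (k*l₀) hkl₀]
      exact hcontr l₀ hl₀ le_rfl (xs n) (hxsS n) y hyS
    refine hc.trans ?_
    rw [h1]
    gcongr
  have hrhs : Tendsto (fun n : ℕ =>
      ENNReal.ofReal (l₀ / (l₀ + k * l₀)) * w l₀ (xs (n + 1)) y
        + ENNReal.ofReal (k * l₀ / (l₀ + k * l₀)) * w l₀ (xs n) y) atTop (nhds 0) := by
    have hshift : Tendsto (fun n : ℕ => w l₀ (xs (n + 1)) y) atTop (nhds 0) :=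
      hylim.comp (tendsto_add_atTop_nat 1)
    have t1 : Tendsto (fun n : ℕ => ENNReal.ofReal (l₀ / (l₀ + k * l₀)) * w l₀ (xs (n + 1)) y)
        atTop (nhds 0) := by
      simpa using ENNReal.Tendsto.const_mul hshift (Or.inr ENNReal.ofReal_ne_top)
    have t2 : Tendsto (fun n : ℕ => ENNReal.ofReal (k * l₀ / (l₀ + k * l₀)) * w l₀ (xs n) y)
        atTop (nhds 0) := by
      simpa using ENNReal.Tendsto.const_mul hylim (Or.inr ENNReal.ofReal_ne_top)
    simpa using t1.add t2
  have hzero : w (l₀ + k * l₀) y (T y) = 0 :=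
    le_antisymm (ge_of_tendsto' hrhs key) (zero_le)
  exact (hstrict y (T y) (l₀ + k * l₀) (by linarith) hzero).symm
end

section
/- Let w be a strict convex modular on X with X_w* modular complete, assuming w takes only finite values on X_w*. If T:X_w*→X_w* satisfies w_{kλ}(Tx,Ty) ≤ w_λ(x,y) for some 0<k<1, some λ₀>0, all 0<λ≤λ₀, and all x,y∈X_w*, then T has a unique fixed point x*, and for each x̄∈X_w* the iterates Tⁿx̄ converge to x* in the modular sense (∃λ>0 with w_λ(Tⁿx̄,x*)→0). -/
open ENNReal Filter

/-- Fixed point theorem, finite-valued case: the fixed point is unique and all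
sequences of iterates converge to it in the modular sense. -/
theorem stmt18 {X : Type*} (w : ℝ → X → X → ℝ≥0∞) (x₀ : X)
    (h0 : ∀ l : ℝ, 0 < l → ∀ x : X, w l x x = 0)
    (hsym : ∀ l : ℝ, 0 < l → ∀ x y : X, w l x y = w l y x)
    (hconv : ∀ l m : ℝ, 0 < l → 0 < m → ∀ x y z : X,
      w (l + m) x y ≤ ENNReal.ofReal (l / (l + m)) * w l x z
        + ENNReal.ofReal (m / (l + m)) * w m y z)
    (hstrict : ∀ x y : X, ∀ l : ℝ, 0 < l → w l x y = 0 → x = y)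
    (S : Set X) (hS : S = {x : X | ∃ l : ℝ, 0 < l ∧ w l x x₀ < ⊤})
    (hcomplete : ∀ (xs : ℕ → X), (∀ n, xs n ∈ S) → ∀ l : ℝ, 0 < l →
      Tendsto (fun p : ℕ × ℕ => w l (xs p.1) (xs p.2)) atTop (nhds 0) →
      ∃ x ∈ S, Tendsto (fun n => w l (xs n) x) atTop (nhds 0))
    (hfin : ∀ l : ℝ, 0 < l → ∀ x ∈ S, ∀ y ∈ S, w l x y < ⊤)
    (T : X → X) (hT : ∀ x ∈ S, T x ∈ S)
    (k l₀ : ℝ) (hk : 0 < k) (hk1 : k < 1) (hl₀ : 0 < l₀)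
    (hcontr : ∀ l : ℝ, 0 < l → l ≤ l₀ → ∀ x ∈ S, ∀ y ∈ S,
      w (k * l) (T x) (T y) ≤ w l x y) :
    ∃ x ∈ S, T x = x ∧ (∀ y ∈ S, T y = y → y = x) ∧
      ∀ z ∈ S, ∃ l : ℝ, 0 < l ∧
        Tendsto (fun n => w l (T^[n] z) x) atTop (nhds 0) := by
  have h1k : (0:ℝ) < 1 - k := by linarith
  have hx₀ : x₀ ∈ S := by
    rw [hS]
    exact ⟨1, one_pos, by simp [h0 1 one_pos x₀]⟩
  -- monotonicity with convex factor
  have hmono : ∀ μ l : ℝ, 0 < μ → μ ≤ l → ∀ x y : X,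
      w l x y ≤ ENNReal.ofReal (μ / l) * w μ x y := by
    intro μ l hμ hle x y
    rcases eq_or_lt_of_le hle with rfl | hlt
    · simp [div_self hμ.ne']
    · have hm : 0 < l - μ := by linarith
      have h := hconv μ (l - μ) hμ hm x y y
      have hsum : μ + (l - μ) = l := by ring
      rw [hsum] at h
      simpa [h0 (l - μ) hm y] using h
  -- iterates stay in S
  have hmemS : ∀ (x : X), x ∈ S → ∀ n : ℕ, T^[n] x ∈ S := by
    intro x hx n
    induction n with
    | zero => simpa using hx
    | succ n ih => rw [Function.iterate_succ_apply']; exact hT _ ih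
  -- iterated contraction at level l₀
  have hiter : ∀ n : ℕ, ∀ x ∈ S, ∀ y ∈ S,
      w (k ^ n * l₀) (T^[n] x) (T^[n] y) ≤ w l₀ x y := by
    intro n x hx y hy
    induction n with
    | zero => simp
    | succ n ih =>
      have hkn : (0:ℝ) < k ^ n * l₀ := by positivity
      have hle : k ^ n * l₀ ≤ l₀ := by
        nlinarith [pow_le_one₀ hk.le hk1.le (n := n)]
      calc w (k ^ (n+1) * l₀) (T^[n+1] x) (T^[n+1] y)
          = w (k * (k ^ n * l₀)) (T (T^[n] x)) (T (T^[n] y)) := by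
            rw [Function.iterate_succ_apply', Function.iterate_succ_apply',
              show k ^ (n+1) * l₀ = k * (k ^ n * l₀) by ring]
        _ ≤ w (k ^ n * l₀) (T^[n] x) (T^[n] y) :=
            hcontr _ hkn hle _ (hmemS x hx n) _ (hmemS y hy n)
        _ ≤ w l₀ x y := ih
  -- contraction with factor at fixed level l₀
  have hcontr2 : ∀ n : ℕ, ∀ x ∈ S, ∀ y ∈ S,
      w l₀ (T^[n] x) (T^[n] y) ≤ ENNReal.ofReal (k ^ n) * w l₀ x y := by
    intro n x hx y hy
    have hkn : (0:ℝ) < k ^ n * l₀ := by positivity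
    have hle : k ^ n * l₀ ≤ l₀ := by
      nlinarith [pow_le_one₀ hk.le hk1.le (n := n)]
    calc w l₀ (T^[n] x) (T^[n] y)
        ≤ ENNReal.ofReal (k ^ n * l₀ / l₀) * w (k ^ n * l₀) (T^[n] x) (T^[n] y) :=
          hmono _ _ hkn hle _ _
      _ ≤ ENNReal.ofReal (k ^ n) * w l₀ x y := by
          rw [mul_div_assoc, div_self hl₀.ne', mul_one]
          exact mul_le_mul_right (hiter n x hx y hy) _
  -- squeeze lemma towards zero
  have hsqueeze : ∀ (f g : ℕ → ℝ≥0∞), Tendsto g atTop (nhds 0) → (∀ n, f n ≤ g n) →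
      Tendsto f atTop (nhds 0) := by
    intro f g hg h
    rw [ENNReal.tendsto_nhds_zero] at hg ⊢
    intro ε hε
    filter_upwards [hg ε hε] with n hn using le_trans (h n) hn
  -- tendsto of geometric bounds
  have htends : ∀ (c : ℝ), ∀ C : ℝ≥0∞, C ≠ ⊤ →
      Tendsto (fun n : ℕ => ENNReal.ofReal (k ^ n / c) * C) atTop (nhds 0) := by
    intro c C hC
    have h1 : Tendsto (fun n : ℕ => k ^ n / c) atTop (nhds 0) := by
      simpa using (tendsto_pow_atTop_nhds_zero_of_lt_one hk.le hk1).div_const c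
    have h2 : Tendsto (fun n : ℕ => ENNReal.ofReal (k ^ n / c)) atTop (nhds 0) := by
      simpa using ENNReal.tendsto_ofReal h1
    simpa using ENNReal.Tendsto.mul_const h2 (Or.inr hC)
  have htends1 : ∀ C : ℝ≥0∞, C ≠ ⊤ →
      Tendsto (fun n : ℕ => ENNReal.ofReal (k ^ n) * C) atTop (nhds 0) := by
    intro C hC
    simpa using htends 1 C hC
  -- key Cauchy chain estimate
  have key : ∀ z ∈ S, ∀ n : ℕ, k ^ n ≤ 1 - k → ∀ j : ℕ,
      w (l₀ * (1 - k ^ (j+1))) (T^[n] z) (T^[n + (j+1)] z)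
        ≤ ENNReal.ofReal (k ^ n / (1 - k)) * w l₀ z (T z) := by
    intro z hz n hn j
    induction j with
    | zero =>
      have hμ : (0:ℝ) < k ^ n * l₀ := by positivity
      have hle : k ^ n * l₀ ≤ l₀ * (1 - k ^ (0+1)) := by
        rw [pow_one]; nlinarith
      have step := hiter n z hz (T z) (hT z hz)
      rw [← Function.iterate_succ_apply] at step
      calc w (l₀ * (1 - k ^ (0+1))) (T^[n] z) (T^[n + (0+1)] z)
          ≤ ENNReal.ofReal (k ^ n * l₀ / (l₀ * (1 - k ^ (0+1)))) *
              w (k ^ n * l₀) (T^[n] z) (T^[n+1] z) := hmono _ _ hμ hle _ _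
        _ ≤ ENNReal.ofReal (k ^ n / (1 - k)) * w l₀ z (T z) := by
            rw [show k ^ n * l₀ / (l₀ * (1 - k ^ (0+1))) = k ^ n / (1 - k) by
              rw [pow_one]; field_simp]
            exact mul_le_mul_right step _
    | succ j ih =>
      set σ : ℝ := l₀ * (1 - k ^ (j+1)) with hσdef
      set μ : ℝ := l₀ * (1 - k) * k ^ (j+1) with hμdef
      have hkj : k ^ (j+1) < 1 := pow_lt_one₀ hk.le hk1 (Nat.succ_ne_zero j)
      have hkj2 : k ^ (j+2) < 1 := pow_lt_one₀ hk.le hk1 (by omega)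
      have hσpos : 0 < σ := by rw [hσdef]; nlinarith
      have hμpos : 0 < μ := by rw [hμdef]; positivity
      have hτpos : (0:ℝ) < l₀ * (1 - k ^ (j+2)) := by nlinarith
      have hsum : σ + μ = l₀ * (1 - k ^ (j+2)) := by
        rw [hσdef, hμdef]; ring
      have conv := hconv σ μ hσpos hμpos (T^[n] z) (T^[n + (j+2)] z) (T^[n + (j+1)] z)
      rw [hsum] at conv
      -- bound the last step
      have hμ2 : (0:ℝ) < k ^ (n + (j+1)) * l₀ := by positivity
      have hle2 : k ^ (n + (j+1)) * l₀ ≤ μ := by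
        rw [hμdef, pow_add]
        have : (0:ℝ) < k ^ (j+1) := by positivity
        nlinarith
      have step2 := hiter (n + (j+1)) z hz (T z) (hT z hz)
      rw [← Function.iterate_succ_apply] at step2
      have hnj : n + (j+1) + 1 = n + (j+2) := by omega
      simp only [Nat.succ_eq_add_one, hnj] at step2
      have t2 : w μ (T^[n + (j+2)] z) (T^[n + (j+1)] z)
          ≤ ENNReal.ofReal (k ^ (n + (j+1)) * l₀ / μ) * w l₀ z (T z) := by
        rw [hsym μ hμpos]
        exact le_trans (hmono _ _ hμ2 hle2 _ _) (mul_le_mul_right step2 _)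
      have t1 : w σ (T^[n] z) (T^[n + (j+1)] z)
          ≤ ENNReal.ofReal (k ^ n / (1 - k)) * w l₀ z (T z) := ih
      have hcoeff : σ / (l₀ * (1 - k ^ (j+2))) * (k ^ n / (1 - k))
          + μ / (l₀ * (1 - k ^ (j+2))) * (k ^ (n + (j+1)) * l₀ / μ)
          = k ^ n / (1 - k) := by
        rw [hσdef, hμdef, pow_add, show j + 2 = (j+1) + 1 by omega, pow_succ]
        have h1 : (1:ℝ) - k ≠ 0 := by linarith
        have h2 : (1:ℝ) - k ^ (j+1+1) ≠ 0 := by linarith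
        have h3 : k ^ (j+1) ≠ 0 := by positivity
        field_simp
        ring
      calc w (l₀ * (1 - k ^ (j+2))) (T^[n] z) (T^[n + (j+2)] z)
          ≤ ENNReal.ofReal (σ / (l₀ * (1 - k ^ (j+2)))) * w σ (T^[n] z) (T^[n + (j+1)] z)
            + ENNReal.ofReal (μ / (l₀ * (1 - k ^ (j+2)))) *
              w μ (T^[n + (j+2)] z) (T^[n + (j+1)] z) := conv
        _ ≤ ENNReal.ofReal (σ / (l₀ * (1 - k ^ (j+2)))) *
              (ENNReal.ofReal (k ^ n / (1 - k)) * w l₀ z (T z))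
            + ENNReal.ofReal (μ / (l₀ * (1 - k ^ (j+2)))) *
              (ENNReal.ofReal (k ^ (n + (j+1)) * l₀ / μ) * w l₀ z (T z)) :=
            add_le_add (mul_le_mul_right t1 _) (mul_le_mul_right t2 _)
        _ = ENNReal.ofReal (k ^ n / (1 - k)) * w l₀ z (T z) := by
            rw [← mul_assoc, ← mul_assoc, ← ENNReal.ofReal_mul (by positivity),
              ← ENNReal.ofReal_mul (by positivity), ← add_mul,
              ← ENNReal.ofReal_add (by positivity) (by positivity), hcoeff]
  -- final Cauchy bound
  have bound : ∀ z ∈ S, ∀ n m : ℕ, k ^ n ≤ 1 - k → n < m →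
      w l₀ (T^[n] z) (T^[m] z) ≤ ENNReal.ofReal (k ^ n / (1 - k)) * w l₀ z (T z) := by
    intro z hz n m hn hnm
    obtain ⟨j, rfl⟩ : ∃ j, m = n + (j+1) := ⟨m - n - 1, by omega⟩
    have hkj : k ^ (j+1) < 1 := pow_lt_one₀ hk.le hk1 (Nat.succ_ne_zero j)
    have hσpos : (0:ℝ) < l₀ * (1 - k ^ (j+1)) := by nlinarith
    have hσle : l₀ * (1 - k ^ (j+1)) ≤ l₀ := by nlinarith [pow_pos hk (j+1)]
    calc w l₀ (T^[n] z) (T^[n + (j+1)] z)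
        ≤ ENNReal.ofReal (l₀ * (1 - k ^ (j+1)) / l₀) *
            w (l₀ * (1 - k ^ (j+1))) (T^[n] z) (T^[n + (j+1)] z) :=
          hmono _ _ hσpos hσle _ _
      _ ≤ 1 * (ENNReal.ofReal (k ^ n / (1 - k)) * w l₀ z (T z)) := by
          refine mul_le_mul' ?_ (key z hz n hn j)
          rw [ENNReal.ofReal_le_one]
          exact div_le_one_of_le₀ hσle hl₀.le
      _ = ENNReal.ofReal (k ^ n / (1 - k)) * w l₀ z (T z) := one_mul _
  -- the iterate sequence of x₀ is modular Cauchy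
  have hD : w l₀ x₀ (T x₀) < ⊤ := hfin l₀ hl₀ x₀ hx₀ (T x₀) (hT x₀ hx₀)
  have hcauchy : Tendsto (fun p : ℕ × ℕ => w l₀ (T^[p.1] x₀) (T^[p.2] x₀)) atTop (nhds 0) := by
    rw [ENNReal.tendsto_nhds_zero]
    intro ε hε
    have hpow : Tendsto (fun n : ℕ => k ^ n) atTop (nhds 0) :=
      tendsto_pow_atTop_nhds_zero_of_lt_one hk.le hk1
    have ev1 : ∀ᶠ n : ℕ in atTop, k ^ n < 1 - k := hpow.eventually_lt_const h1k
    have ev2 : ∀ᶠ n : ℕ in atTop,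
        ENNReal.ofReal (k ^ n / (1 - k)) * w l₀ x₀ (T x₀) ≤ ε := by
      have := htends (1 - k) _ hD.ne
      rw [ENNReal.tendsto_nhds_zero] at this
      exact this ε hε
    obtain ⟨M, hM⟩ := eventually_atTop.1 (ev1.and ev2)
    rw [eventually_atTop]
    refine ⟨(M, M), fun p hp => ?_⟩
    obtain ⟨hp1, hp2⟩ := hp
    have hbnd : ∀ a b : ℕ, M ≤ a → a < b → w l₀ (T^[a] x₀) (T^[b] x₀) ≤ ε := by
      intro a b ha hab
      have hka : k ^ a ≤ k ^ M := pow_le_pow_of_le_one hk.le hk1.le ha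
      have h1 : w l₀ (T^[a] x₀) (T^[b] x₀)
          ≤ ENNReal.ofReal (k ^ a / (1 - k)) * w l₀ x₀ (T x₀) :=
        bound x₀ hx₀ a b (le_trans hka (hM M le_rfl).1.le) hab
      refine le_trans h1 (le_trans ?_ (hM M le_rfl).2)
      refine mul_le_mul_left (ENNReal.ofReal_le_ofReal ?_) _
      exact div_le_div_of_nonneg_right hka h1k.le
    rcases lt_trichotomy p.1 p.2 with h | h | h
    · exact hbnd p.1 p.2 hp1 h
    · rw [h, h0 l₀ hl₀]
      exact zero_le
    · rw [hsym l₀ hl₀]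
      exact hbnd p.2 p.1 hp2 h
  -- obtain the limit point
  obtain ⟨xs_star, hxsS, hlim⟩ := hcomplete (fun n => T^[n] x₀) (hmemS x₀ hx₀) l₀ hl₀ hcauchy
  -- limit of the shifted sequence towards T xs_star
  have hlim1 : Tendsto (fun n => w l₀ (T^[n+1] x₀) (T xs_star)) atTop (nhds 0) := by
    refine hsqueeze _ (fun n => ENNReal.ofReal k * w l₀ (T^[n] x₀) xs_star) ?_ ?_
    · have h' : Tendsto (fun n => ENNReal.ofReal k * w l₀ (T^[n] x₀) xs_star) atTop
          (nhds (ENNReal.ofReal k * 0)) :=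
        ENNReal.Tendsto.const_mul hlim (Or.inr ENNReal.ofReal_ne_top)
      simpa using h'
    · intro n
      have hkl : (0:ℝ) < k * l₀ := by positivity
      have hle : k * l₀ ≤ l₀ := by nlinarith
      calc w l₀ (T^[n+1] x₀) (T xs_star)
          = w l₀ (T (T^[n] x₀)) (T xs_star) := by rw [Function.iterate_succ_apply']
        _ ≤ ENNReal.ofReal (k * l₀ / l₀) * w (k * l₀) (T (T^[n] x₀)) (T xs_star) :=
            hmono _ _ hkl hle _ _
        _ ≤ ENNReal.ofReal k * w l₀ (T^[n] x₀) xs_star := by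
            rw [mul_div_assoc, div_self hl₀.ne', mul_one]
            exact mul_le_mul_right (hcontr l₀ hl₀ le_rfl _ (hmemS x₀ hx₀ n) _ hxsS) _
  -- xs_star is a fixed point
  have hfix : T xs_star = xs_star := by
    have hzero : w (l₀ + l₀) (T xs_star) xs_star = 0 := by
      have hb : ∀ n : ℕ, w (l₀ + l₀) (T xs_star) xs_star
          ≤ ENNReal.ofReal (l₀ / (l₀ + l₀)) * w l₀ (T^[n+1] x₀) (T xs_star)
            + ENNReal.ofReal (l₀ / (l₀ + l₀)) * w l₀ (T^[n+1] x₀) xs_star := by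
        intro n
        have := hconv l₀ l₀ hl₀ hl₀ (T xs_star) xs_star (T^[n+1] x₀)
        rwa [hsym l₀ hl₀ (T xs_star) (T^[n+1] x₀), hsym l₀ hl₀ xs_star (T^[n+1] x₀)] at this
      have hrhs : Tendsto (fun n : ℕ =>
          ENNReal.ofReal (l₀ / (l₀ + l₀)) * w l₀ (T^[n+1] x₀) (T xs_star)
            + ENNReal.ofReal (l₀ / (l₀ + l₀)) * w l₀ (T^[n+1] x₀) xs_star)
          atTop (nhds 0) := by
        have ht1 : Tendsto (fun n : ℕ =>
            ENNReal.ofReal (l₀ / (l₀ + l₀)) * w l₀ (T^[n+1] x₀) (T xs_star))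
            atTop (nhds 0) := by
          have h' : Tendsto (fun n : ℕ =>
              ENNReal.ofReal (l₀ / (l₀ + l₀)) * w l₀ (T^[n+1] x₀) (T xs_star)) atTop
              (nhds (ENNReal.ofReal (l₀ / (l₀ + l₀)) * 0)) :=
            ENNReal.Tendsto.const_mul hlim1 (Or.inr ENNReal.ofReal_ne_top)
          simpa using h'
        have hlim2 : Tendsto (fun n : ℕ => w l₀ (T^[n+1] x₀) xs_star) atTop (nhds 0) :=
          hlim.comp (tendsto_add_atTop_nat 1)
        have ht2 : Tendsto (fun n : ℕ =>
            ENNReal.ofReal (l₀ / (l₀ + l₀)) * w l₀ (T^[n+1] x₀) xs_star)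
            atTop (nhds 0) := by
          have h' : Tendsto (fun n : ℕ =>
              ENNReal.ofReal (l₀ / (l₀ + l₀)) * w l₀ (T^[n+1] x₀) xs_star) atTop
              (nhds (ENNReal.ofReal (l₀ / (l₀ + l₀)) * 0)) :=
            ENNReal.Tendsto.const_mul hlim2 (Or.inr ENNReal.ofReal_ne_top)
          simpa using h'
        simpa using ht1.add ht2
      have : w (l₀ + l₀) (T xs_star) xs_star ≤ 0 := ge_of_tendsto' hrhs hb
      exact le_antisymm this zero_le
    exact hstrict _ _ (l₀ + l₀) (by linarith) hzero
  refine ⟨xs_star, hxsS, hfix, ?_, ?_⟩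
  · -- uniqueness
    intro y hy hTy
    have hC : w l₀ y xs_star < ⊤ := hfin l₀ hl₀ y hy xs_star hxsS
    have hb : ∀ n : ℕ, w l₀ y xs_star ≤ ENNReal.ofReal (k ^ n) * w l₀ y xs_star := by
      intro n
      have := hcontr2 n y hy xs_star hxsS
      rwa [Function.iterate_fixed hTy n, Function.iterate_fixed hfix n] at this
    have : w l₀ y xs_star ≤ 0 := ge_of_tendsto' (htends1 _ hC.ne) hb
    exact hstrict y xs_star l₀ hl₀ (le_antisymm this zero_le)
  · -- convergence of all iterate sequences
    intro z hz
    refine ⟨l₀, hl₀, ?_⟩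
    have hC : w l₀ z xs_star < ⊤ := hfin l₀ hl₀ z hz xs_star hxsS
    refine hsqueeze _ (fun n => ENNReal.ofReal (k ^ n) * w l₀ z xs_star)
      (htends1 _ hC.ne) ?_
    intro n
    have := hcontr2 n z hz xs_star hxsS
    rwa [Function.iterate_fixed hfix n] at this
end

section
/- Let w be a strict modular on X (not necessarily convex) with X_w* modular complete, and T:X_w*→X_w* strongly modular contractive: there exist 0<k<1 and λ₀>0 with w_{kλ}(Tx,Ty) ≤ k·w_λ(x,y) for all 0<λ≤λ₀ and x,y∈X_w*. Assume for each λ>0 there exists x∈X_w* with w_λ(x,Tx)<∞. Then T has a fixed point in X_w*. -/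
open ENNReal Filter

/-- Fixed point theorem for strong modular contractions of a strict (not
necessarily convex) modular. -/
theorem stmt19 {X : Type*} (w : ℝ → X → X → ℝ≥0∞) (x₀ : X)
    (h0 : ∀ l : ℝ, 0 < l → ∀ x : X, w l x x = 0)
    (hsym : ∀ l : ℝ, 0 < l → ∀ x y : X, w l x y = w l y x)
    (htri : ∀ l m : ℝ, 0 < l → 0 < m → ∀ x y z : X,
      w (l + m) x y ≤ w l x z + w m z y)
    (hstrict : ∀ x y : X, ∀ l : ℝ, 0 < l → w l x y = 0 → x = y)
    (S : Set X) (hS : S = {x : X | ∃ l : ℝ, 0 < l ∧ w l x x₀ < ⊤})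
    (hcomplete : ∀ (xs : ℕ → X), (∀ n, xs n ∈ S) → ∀ l : ℝ, 0 < l →
      Tendsto (fun p : ℕ × ℕ => w l (xs p.1) (xs p.2)) atTop (nhds 0) →
      ∃ x ∈ S, Tendsto (fun n => w l (xs n) x) atTop (nhds 0))
    (T : X → X) (hT : ∀ x ∈ S, T x ∈ S)
    (k l₀ : ℝ) (hk : 0 < k) (hk1 : k < 1) (hl₀ : 0 < l₀)
    (hcontr : ∀ l : ℝ, 0 < l → l ≤ l₀ → ∀ x ∈ S, ∀ y ∈ S,
      w (k * l) (T x) (T y) ≤ ENNReal.ofReal k * w l x y)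
    (hreach : ∀ l : ℝ, 0 < l → ∃ x ∈ S, w l x (T x) < ⊤) :
    ∃ x ∈ S, T x = x := by
  -- monotonicity of the modular in the parameter
  have hmono : ∀ l m : ℝ, 0 < l → l ≤ m → ∀ x y : X, w m x y ≤ w l x y := by
    intro l m hl hlm x y
    rcases eq_or_lt_of_le hlm with h | h
    · subst h; exact le_refl _
    · have h' := htri l (m - l) hl (by linarith) x y y
      rw [add_sub_cancel] at h'
      calc w m x y ≤ w l x y + w (m - l) y y := h'
        _ = w l x y := by rw [h0 _ (by linarith), add_zero]
  set r : ℝ≥0∞ := ENNReal.ofReal k with hr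
  have hr1 : r < 1 := by
    rw [hr, ← ENNReal.ofReal_one]
    exact (ENNReal.ofReal_lt_ofReal_iff one_pos).2 hk1
  have hrne : r ≠ ⊤ := ENNReal.ofReal_ne_top
  set l₁ : ℝ := (1 - k) * l₀ with hl₁def
  have hl₁ : 0 < l₁ := mul_pos (by linarith) hl₀
  have hl₁le : l₁ ≤ l₀ := by
    rw [hl₁def]; nlinarith
  obtain ⟨x₁, hx₁S, hx₁⟩ := hreach l₁ hl₁
  set xs : ℕ → X := fun n => T^[n] x₁ with hxsdef
  have hxs0 : xs 0 = x₁ := rfl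
  have hxssucc : ∀ n, xs (n + 1) = T (xs n) := by
    intro n; simp [hxsdef, Function.iterate_succ_apply']
  have hxsS : ∀ n, xs n ∈ S := by
    intro n; induction n with
    | zero => exact hx₁S
    | succ n ih => rw [hxssucc]; exact hT _ ih
  set C : ℝ≥0∞ := w l₁ x₁ (T x₁) with hC
  have hCne : C ≠ ⊤ := hx₁.ne
  have hpow_pos : ∀ n : ℕ, 0 < k ^ n * l₁ := fun n => mul_pos (pow_pos hk n) hl₁
  have hpow_le : ∀ n : ℕ, k ^ n * l₁ ≤ l₀ := by
    intro n
    calc k ^ n * l₁ ≤ 1 * l₁ := by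
          apply mul_le_mul_of_nonneg_right _ hl₁.le
          exact pow_le_one₀ hk.le hk1.le
      _ = l₁ := one_mul _
      _ ≤ l₀ := hl₁le
  -- iterates estimate
  have key : ∀ n : ℕ, w (k ^ n * l₁) (xs n) (xs (n + 1)) ≤ r ^ n * C := by
    intro n; induction n with
    | zero => simp [hxs0, hxssucc, hC]
    | succ n ih =>
      have h1 : w (k * (k ^ n * l₁)) (T (xs n)) (T (xs (n + 1))) ≤
          r * w (k ^ n * l₁) (xs n) (xs (n + 1)) :=
        hcontr _ (hpow_pos n) (hpow_le n) _ (hxsS n) _ (hxsS (n + 1))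
      have heq : k ^ (n + 1) * l₁ = k * (k ^ n * l₁) := by ring
      rw [heq, hxssucc n, hxssucc (n + 1)]
      calc w (k * (k ^ n * l₁)) (T (xs n)) (T (xs (n+1)))
          ≤ r * w (k ^ n * l₁) (xs n) (xs (n + 1)) := h1
        _ ≤ r * (r ^ n * C) := mul_le_mul_right ih r
        _ = r ^ (n + 1) * C := by ring
  -- chained estimate
  have chain : ∀ n m : ℕ, n < m →
      w (∑ i ∈ Finset.Ico n m, k ^ i * l₁) (xs n) (xs m) ≤
        ∑ i ∈ Finset.Ico n m, r ^ i * C := by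
    intro n m hnm
    induction m, hnm using Nat.le_induction with
    | base =>
      rw [Finset.sum_Ico_succ_top (le_refl n), Finset.Ico_self, Finset.sum_empty,
        zero_add, Finset.sum_Ico_succ_top (le_refl n), Finset.Ico_self,
        Finset.sum_empty, zero_add]
      exact key n
    | succ m hm ih =>
      have hsum_pos : 0 < ∑ i ∈ Finset.Ico n m, k ^ i * l₁ :=
        Finset.sum_pos (fun i _ => hpow_pos i) (Finset.nonempty_Ico.2 (Nat.lt_of_succ_le hm))
      have h1 : ∑ i ∈ Finset.Ico n (m + 1), k ^ i * l₁ =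
          (∑ i ∈ Finset.Ico n m, k ^ i * l₁) + k ^ m * l₁ := by
        rw [Finset.sum_Ico_succ_top (Nat.le_of_succ_le hm)]
      have h2 : ∑ i ∈ Finset.Ico n (m + 1), r ^ i * C =
          (∑ i ∈ Finset.Ico n m, r ^ i * C) + r ^ m * C := by
        rw [Finset.sum_Ico_succ_top (Nat.le_of_succ_le hm)]
      rw [h1, h2]
      calc w ((∑ i ∈ Finset.Ico n m, k ^ i * l₁) + k ^ m * l₁) (xs n) (xs (m + 1))
          ≤ w (∑ i ∈ Finset.Ico n m, k ^ i * l₁) (xs n) (xs m) +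
            w (k ^ m * l₁) (xs m) (xs (m + 1)) :=
            htri _ _ hsum_pos (hpow_pos m) _ _ _
        _ ≤ (∑ i ∈ Finset.Ico n m, r ^ i * C) + r ^ m * C :=
            add_le_add ih (key m)
  -- the parameter sums stay below l₀
  have hsum_le_l0 : ∀ n m : ℕ, (∑ i ∈ Finset.Ico n m, k ^ i * l₁) ≤ l₀ := by
    intro n m
    have h1 : (∑ i ∈ Finset.Ico n m, k ^ i * l₁) ≤ ∑ i ∈ Finset.range m, k ^ i * l₁ := by
      apply Finset.sum_le_sum_of_subset_of_nonneg
      · intro i hi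
        simp only [Finset.mem_Ico] at hi
        exact Finset.mem_range.2 hi.2
      · intro i _ _; exact (hpow_pos i).le
    have h2 : ∑ i ∈ Finset.range m, k ^ i * l₁ = (∑ i ∈ Finset.range m, k ^ i) * l₁ := by
      rw [Finset.sum_mul]
    have hne : (1 : ℝ) - k ≠ 0 := by linarith
    have h3 : (∑ i ∈ Finset.range m, k ^ i) ≤ 1 / (1 - k) := by
      have hpm : (0 : ℝ) ≤ k ^ m := pow_nonneg hk.le m
      calc (∑ i ∈ Finset.range m, k ^ i) = (k ^ m - 1) / (k - 1) := geom_sum_eq hk1.ne m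
        _ = (1 - k ^ m) / (1 - k) := by rw [← neg_div_neg_eq]; ring_nf
        _ ≤ 1 / (1 - k) := by gcongr <;> linarith
    calc (∑ i ∈ Finset.Ico n m, k ^ i * l₁) ≤ (∑ i ∈ Finset.range m, k ^ i) * l₁ := by
          rw [← h2]; exact h1
      _ ≤ (1 / (1 - k)) * l₁ := mul_le_mul_of_nonneg_right h3 hl₁.le
      _ = l₀ := by
          have hne : (1 : ℝ) - k ≠ 0 := by linarith
          rw [hl₁def]; field_simp
  -- the tail of the geometric series
  set D : ℝ≥0∞ := (1 - r)⁻¹ * C with hD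
  have hDne : D ≠ ⊤ := by
    apply ENNReal.mul_ne_top _ hCne
    simp only [ne_eq, ENNReal.inv_eq_top, tsub_eq_zero_iff_le, not_le]
    exact hr1
  have geom_tail : ∀ n m : ℕ, (∑ i ∈ Finset.Ico n m, r ^ i * C) ≤ r ^ n * D := by
    intro n m
    rcases le_or_gt m n with h | h
    · rw [Finset.Ico_eq_empty (by omega), Finset.sum_empty]
      exact zero_le
    · rw [Finset.sum_Ico_eq_sum_range]
      have : ∀ i ∈ Finset.range (m - n), r ^ (n + i) * C = r ^ n * (r ^ i * C) := by
        intro i _; rw [pow_add]; ring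
      rw [Finset.sum_congr rfl this, ← Finset.mul_sum]
      apply mul_le_mul_right
      calc (∑ i ∈ Finset.range (m - n), r ^ i * C)
          = (∑ i ∈ Finset.range (m - n), r ^ i) * C := by rw [Finset.sum_mul]
        _ ≤ (∑' i : ℕ, r ^ i) * C :=
            mul_le_mul_left (ENNReal.sum_le_tsum _) C
        _ = D := by rw [ENNReal.tsum_geometric, hD]
  -- Cauchy estimate
  have cauchy : ∀ n m : ℕ, w l₀ (xs n) (xs m) ≤ r ^ (min n m) * D := by
    have base : ∀ n m : ℕ, n < m → w l₀ (xs n) (xs m) ≤ r ^ n * D := by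
      intro n m hnm
      have hpos : 0 < ∑ i ∈ Finset.Ico n m, k ^ i * l₁ :=
        Finset.sum_pos (fun i _ => hpow_pos i) (by simp [hnm])
      calc w l₀ (xs n) (xs m) ≤ w (∑ i ∈ Finset.Ico n m, k ^ i * l₁) (xs n) (xs m) :=
            hmono _ _ hpos (hsum_le_l0 n m) _ _
        _ ≤ ∑ i ∈ Finset.Ico n m, r ^ i * C := chain n m hnm
        _ ≤ r ^ n * D := geom_tail n m
    intro n m
    rcases lt_trichotomy n m with h | h | h
    · rw [min_eq_left h.le]; exact base n m h
    · subst h; rw [h0 _ hl₀]; exact zero_le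
    · rw [min_eq_right h.le, hsym _ hl₀]; exact base m n h
  -- the Picard sequence is modular Cauchy at level l₀
  have hmin_tendsto : Tendsto (fun p : ℕ × ℕ => min p.1 p.2) atTop atTop := by
    apply tendsto_atTop_atTop.2
    intro b
    exact ⟨(b, b), fun p hp => le_min hp.1 hp.2⟩
  have hbound_tendsto : Tendsto (fun p : ℕ × ℕ => r ^ (min p.1 p.2) * D) atTop (nhds 0) := by
    have h1 : Tendsto (fun j : ℕ => r ^ j) atTop (nhds 0) :=
      ENNReal.tendsto_pow_atTop_nhds_zero_of_lt_one hr1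
    have h2 : Tendsto (fun p : ℕ × ℕ => r ^ (min p.1 p.2)) atTop (nhds 0) :=
      h1.comp hmin_tendsto
    have := ENNReal.Tendsto.mul_const h2 (Or.inr hDne)
    simpa using this
  have hCauchy : Tendsto (fun p : ℕ × ℕ => w l₀ (xs p.1) (xs p.2)) atTop (nhds 0) := by
    apply tendsto_of_tendsto_of_tendsto_of_le_of_le tendsto_const_nhds hbound_tendsto
    · intro p; exact zero_le
    · intro p; exact cauchy p.1 p.2
  obtain ⟨x, hxS, hxlim⟩ := hcomplete xs hxsS l₀ hl₀ hCauchy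
  refine ⟨x, hxS, ?_⟩
  -- show T x = x
  have hineq : ∀ n : ℕ, w (l₀ + l₀) (T x) x ≤ r * w l₀ (xs n) x + w l₀ (xs (n + 1)) x := by
    intro n
    have h1 : w (l₀ + l₀) (T x) x ≤ w l₀ (T x) (xs (n + 1)) + w l₀ (xs (n + 1)) x :=
      htri _ _ hl₀ hl₀ _ _ _
    have h2 : w l₀ (T x) (xs (n + 1)) ≤ r * w l₀ (xs n) x := by
      rw [hxssucc n]
      calc w l₀ (T x) (T (xs n)) ≤ w (k * l₀) (T x) (T (xs n)) := by
            apply hmono _ _ (mul_pos hk hl₀) (by nlinarith)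
        _ ≤ r * w l₀ x (xs n) := hcontr l₀ hl₀ le_rfl _ hxS _ (hxsS n)
        _ = r * w l₀ (xs n) x := by rw [hsym _ hl₀]
    exact h1.trans (add_le_add_left h2 _)
  have hlim2 : Tendsto (fun n : ℕ => r * w l₀ (xs n) x + w l₀ (xs (n + 1)) x)
      atTop (nhds 0) := by
    have ha : Tendsto (fun n : ℕ => r * w l₀ (xs n) x) atTop (nhds 0) := by
      have := ENNReal.Tendsto.const_mul hxlim (Or.inr hrne)
      simpa using this
    have hb : Tendsto (fun n : ℕ => w l₀ (xs (n + 1)) x) atTop (nhds 0) :=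
      hxlim.comp (tendsto_add_atTop_nat 1)
    simpa using ha.add hb
  have hzero : w (l₀ + l₀) (T x) x ≤ 0 := ge_of_tendsto' hlim2 hineq
  exact hstrict _ _ (l₀ + l₀) (by linarith) (le_antisymm hzero zero_le)
end
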